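/- Let X be a partially ordered vector space and V a subspace with V ∩ V^⊥ = {0} and X = V ⊕ V^⊥. If P is the linear projection onto V along V^⊥, then both P and I - P are positive. -/

import Mathlib

/-- Two vectors are disjoint: the upper bounds of {x+y, -x-y} equal those of {x-y, y-x}. -/
def Disj {X : Type*} [AddCommGroup X] [PartialOrder X] (x y : X) : Prop :=
  upperBounds ({x + y, -x - y} : Set X) = upperBounds ({x - y, y - x} : Set X)


/-- The disjoint complement of a set. -/
def DisjComp {X : Type*} [AddCommGroup X] [PartialOrder X] (S : Set X) : Set X :=
  {x | ∀ y ∈ S, Disj x y}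

/-- If `x ⊥ y` and `x + y ≥ 0`, then both `x ≥ 0` and `y ≥ 0`. -/
lemma disj_sum_nonneg {X : Type*} [AddCommGroup X] [PartialOrder X] [IsOrderedAddMonoid X] [Module ℝ X]
    [PosSMulStrictMono ℝ X] [PosSMulReflectLT ℝ X] {x y : X} (h : Disj x y) (hxy : 0 ≤ x + y) :
    0 ≤ x ∧ 0 ≤ y := by
  have hub : x + y ∈ upperBounds ({x + y, -x - y} : Set X) := by
    intro z hz
    rcases hz with rfl | hz
    · exact le_refl _
    · simp only [Set.mem_singleton_iff] at hz
      subst hz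
      calc -x - y = -(x + y) := by abel
        _ ≤ 0 := neg_nonpos_of_nonneg hxy
        _ ≤ x + y := hxy
  rw [h] at hub
  have h1 : x - y ≤ x + y := hub (Set.mem_insert _ _)
  have h2 : y - x ≤ x + y := hub (Set.mem_insert_of_mem _ rfl)
  have hy : 0 ≤ y + y := by
    have h := sub_nonneg.mpr h1
    rwa [show x + y - (x - y) = y + y by abel] at h
  have hx : 0 ≤ x + x := by
    have h := sub_nonneg.mpr h2
    rwa [show x + y - (y - x) = x + x by abel] at h
  constructor
  · have := smul_nonneg (by norm_num : (0:ℝ) ≤ (1/2 : ℝ)) hx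
    have e : (1/2 : ℝ) • (x + x) = x := by
      rw [smul_add]; rw [← add_smul]; norm_num
    rwa [e] at this
  · have := smul_nonneg (by norm_num : (0:ℝ) ≤ (1/2 : ℝ)) hy
    have e : (1/2 : ℝ) • (y + y) = y := by
      rw [smul_add]; rw [← add_smul]; norm_num
    rwa [e] at this

theorem projection_onto_band_positive {X : Type*} [AddCommGroup X] [PartialOrder X] [IsOrderedAddMonoid X] [Module ℝ X]
    [PosSMulStrictMono ℝ X] [PosSMulReflectLT ℝ X]
    (V : Submodule ℝ X)
    (hinter : (V : Set X) ∩ DisjComp (V : Set X) = {0})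
    (hsum : ∀ x : X, ∃ v ∈ V, ∃ w ∈ DisjComp (V : Set X), x = v + w)
    (P : X →ₗ[ℝ] X)
    (hPV : ∀ v ∈ V, P v = v)
    (hPperp : ∀ w ∈ DisjComp (V : Set X), P w = 0) :
    ∀ x : X, 0 ≤ x → 0 ≤ P x ∧ P x ≤ x := by
  intro x hx
  obtain ⟨v, hv, w, hw, rfl⟩ := hsum x
  have hd : Disj w v := hw v hv
  have hsum' : 0 ≤ w + v := by rwa [add_comm] at hx
  obtain ⟨hw0, hv0⟩ := disj_sum_nonneg hd hsum'
  have hP : P (v + w) = v := by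
    rw [map_add, hPV v hv, hPperp w hw, add_zero]
  rw [hP]
  exact ⟨hv0, le_add_of_nonneg_right hw0⟩
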